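/- Let U = (W, d, π) be an update structure and define for A, B ⊆ W: min_U(A, B) = {w ∈ B : ∃w₀ ∈ A, ∀w' ∈ B, d(w₀, w') ⊀ d(w₀, w)}. Then the induced belief change operator ⋄ defined by ⟦φ ⋄ ψ⟧ = min_U(⟦φ⟧, ⟦ψ⟧) satisfies postulate U2: if ⊨ μ → φ then ⟦μ ⋄ φ⟧ = ⟦μ⟧. -/
import Mathlib


/-- Propositional formulas over atoms of type `α`. -/
inductive Form (α : Type) : Type
  | atom : α → Form α
  | fls : Form α
  | neg : Form α → Form α
  | conj : Form α → Form α → Form α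
  | disj : Form α → Form α → Form α
  | impl : Form α → Form α → Form α

/-- Truth-value of a formula under a valuation. -/
def Form.eval {α : Type} (v : α → Bool) : Form α → Bool
  | .atom a => v a
  | .fls => false
  | .neg φ => !(Form.eval v φ)
  | .conj φ ψ => Form.eval v φ && Form.eval v ψ
  | .disj φ ψ => Form.eval v φ || Form.eval v ψ
  | .impl φ ψ => !(Form.eval v φ) || Form.eval v ψ

/-- The set of worlds (under world-valuation `π`) satisfying `φ`. -/
def truthSet {W α : Type} (π : W → α → Bool) (φ : Form α) : Set W :=
  {w | Form.eval (π w) φ = true}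

/-- Propositional validity. -/
def Taut {α : Type} (φ : Form α) : Prop := ∀ v : α → Bool, Form.eval v φ = true

/-- Propositional consequence. -/
def entails {α : Type} (Γ : Set (Form α)) (φ : Form α) : Prop :=
  ∀ v : α → Bool, (∀ γ ∈ Γ, Form.eval v γ = true) → Form.eval v φ = true

/-- Deductive closure. -/
def Cl {α : Type} (Γ : Set (Form α)) : Set (Form α) := {φ | entails Γ φ}

/-- The conditional `φ ↝ ψ`: `Pl ⟦φ⟧ = ⊥` or `Pl ⟦φ ∧ ψ⟧ > Pl ⟦φ ∧ ¬ψ⟧`. -/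
def Cond {W α D : Type} [PartialOrder D] [OrderBot D]
    (Pl : Set W → D) (π : W → α → Bool) (φ ψ : Form α) : Prop :=
  Pl (truthSet π φ) = ⊥ ∨
    Pl (truthSet π (φ.conj ψ.neg)) < Pl (truthSet π (φ.conj ψ))

/-- Satisfaction of `φ ↝ ψ` in a preferential structure (Lewis/Boutilier style). -/
def PrefSat {W α : Type} (prec : W → W → Prop) (π : W → α → Bool)
    (φ ψ : Form α) : Prop :=
  ∀ w₁ ∈ truthSet π φ, ∃ w₂, (prec w₂ w₁ ∨ w₂ = w₁) ∧
    w₂ ∈ truthSet π (φ.conj ψ) ∧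
    ∀ w₃, prec w₃ w₂ → w₃ ∈ truthSet π (φ.impl ψ)

/-- Katsuno–Mendelzon minimization: worlds in `B` closest to some world of `A`. -/
def minU {W D : Type} [PartialOrder D] (d : W → W → D) (A B : Set W) : Set W :=
  {w | w ∈ B ∧ ∃ w₀ ∈ A, ∀ w' ∈ B, ¬ d w₀ w' < d w₀ w}

theorem stmt17 {W α D : Type} [Fintype W] [Nonempty W] [PartialOrder D]
    (d : W → W → D) (z : D) (hz : ∀ x, z ≤ x)
    (hd : ∀ w w', d w w' = z ↔ w = w')
    (π : W → α → Bool) (hinj : Function.Injective π)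
    (hcover : ∀ φ : Form α, (∃ v, Form.eval v φ = true) → ∃ w, w ∈ truthSet π φ)
    (μ φ : Form α) (himp : Taut (μ.impl φ)) :
    minU d (truthSet π μ) (truthSet π φ) = truthSet π μ := by
  have hsub : truthSet π μ ⊆ truthSet π φ := by
    intro w hw
    have := himp (π w)
    simp [truthSet, Form.eval] at this hw ⊢
    rcases this with h | h
    · simp [hw] at h
    · exact h
  ext w
  constructor
  · rintro ⟨hwφ, w₀, hw₀, hmin⟩
    have h0 : ¬ d w₀ w₀ < d w₀ w := hmin w₀ (hsub hw₀)
    have hz0 : d w₀ w₀ = z := (hd w₀ w₀).2 rfl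
    have : d w₀ w = z := le_antisymm (by
      by_contra h
      exact h0 (hz0 ▸ lt_of_le_of_ne (hz _) (fun e => h (le_of_eq e.symm)))) (hz _)
    have : w₀ = w := (hd w₀ w).1 this
    exact this ▸ hw₀
  · intro hw
    exact ⟨hsub hw, w, hw, fun w' _ h => absurd h (by rw [(hd w w).2 rfl]; exact not_lt_of_ge (hz _))⟩
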